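/- Let p be prime, λ ≥ 1, s ≥ 1 integers, and define integers α_{k,s} by ((x+1)^{p^λ} − 1)^s = Σ_{k=s}^{s p^λ} α_{k,s} x^k. Then for every integer δ with 0 ≤ δ ≤ λ−1 and every k, one has |α_{k,s}|_p ≤ ω^{sp + δ(p−1)s − k p^{δ+1−λ}} where ω = p^{−1/(p−1)}, i.e. v_p(α_{k,s}) ≥ (sp + δ(p−1)s − k p^{δ+1−λ})/(p−1). Moreover equality holds if k = s p^{λ−δ−1} or k = s p^{λ−δ}; in particular |α_{s p^λ, s}|_p = 1 and |α_{p^{λ−δ},1}|_p = p^{−δ}. -/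

import Mathlib

open Polynomial

theorem bern_le (p : ℕ) (hp : 1 < p) (z : ℤ) : 1 + ((p:ℝ) - 1) * z ≤ (p:ℝ) ^ z := by
  have hp2 : (2:ℝ) ≤ p := by exact_mod_cast hp
  rcases le_or_gt 0 z with hz | hz
  · lift z to ℕ using hz
    have := one_add_mul_le_pow (a := (p:ℝ) - 1) (by linarith) z
    simpa [add_comm, mul_comm] using this.trans_eq (by ring_nf)
  · have h1 : (0:ℝ) < (p:ℝ) ^ z := zpow_pos (by linarith) z
    have hz1 : (z:ℝ) ≤ -1 := by exact_mod_cast Int.le_of_lt_add_one (by simpa using hz)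
    nlinarith

theorem bern_lt (p : ℕ) (hp : 1 < p) (z : ℤ) (h0 : z ≠ 0) (h1 : z ≠ 1) :
    1 + ((p:ℝ) - 1) * z < (p:ℝ) ^ z := by
  have hp2 : (2:ℝ) ≤ p := by exact_mod_cast hp
  rcases lt_or_lt_iff_ne.2 h0 with hz | hz
  · have h1 : (0:ℝ) < (p:ℝ) ^ z := zpow_pos (by linarith) z
    have hz1 : (z:ℝ) ≤ -1 := by exact_mod_cast Int.le_of_lt_add_one (by simpa using hz)
    nlinarith
  · -- z ≥ 1, z ≠ 1 so z ≥ 2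
    have hz2 : 2 ≤ z := by omega
    lift z to ℕ using (by omega : (0:ℤ) ≤ z)
    have hz2' : 2 ≤ z := by exact_mod_cast hz2
    rw [zpow_natCast]
    have key : ∀ n : ℕ, 2 ≤ n → 1 + ((p:ℝ)-1) * n < (p:ℝ)^n := by
      intro n hn
      induction n with
      | zero => omega
      | succ m ih =>
        rcases Nat.lt_or_ge m 2 with hm | hm
        · interval_cases m
          · omega
          · push_cast; nlinarith
        · have := ih (by omega)
          have hpm : (1:ℝ) ≤ (p:ℝ)^m := one_le_pow₀ (by linarith)
          push_cast [pow_succ]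
          push_cast at this
          nlinarith
    exact_mod_cast key z hz2'

theorem omega_rpow (p : ℕ) (hp : 1 < p) (E : ℝ) :
    ((p:ℝ) ^ (-(1/((p:ℝ)-1)))) ^ E = (p:ℝ) ^ (-(E/((p:ℝ)-1))) := by
  rw [← Real.rpow_mul (by positivity)]
  ring_nf

theorem cast_zpow_neg (p : ℕ) (hp : 0 < p) (w : ℕ) :
    (((p:ℚ) ^ (-(w:ℤ)) : ℚ) : ℝ) = (p:ℝ) ^ (-(w:ℝ)) := by
  push_cast
  rw [← Real.rpow_intCast]
  norm_num

theorem cmp_le (p : ℕ) (hp : 1 < p) (w : ℕ) (E : ℝ) (h : E ≤ ((p:ℝ)-1)*w) :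
    (((p:ℚ) ^ (-(w:ℤ)) : ℚ) : ℝ) ≤ ((p:ℝ) ^ (-(1/((p:ℝ)-1)))) ^ E := by
  have hp1 : (1:ℝ) < p := by exact_mod_cast hp
  rw [cast_zpow_neg p (by omega), omega_rpow p hp]
  rw [Real.rpow_le_rpow_left_iff hp1]
  rw [neg_le_neg_iff, div_le_iff₀ (by linarith)]
  linarith

theorem cmp_lt (p : ℕ) (hp : 1 < p) (w : ℕ) (E : ℝ) (h : E < ((p:ℝ)-1)*w) :
    (((p:ℚ) ^ (-(w:ℤ)) : ℚ) : ℝ) < ((p:ℝ) ^ (-(1/((p:ℝ)-1)))) ^ E := by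
  have hp1 : (1:ℝ) < p := by exact_mod_cast hp
  rw [cast_zpow_neg p (by omega), omega_rpow p hp]
  rw [Real.rpow_lt_rpow_left_iff hp1]
  rw [neg_lt_neg_iff, div_lt_iff₀ (by linarith)]
  linarith

theorem cmp_eq (p : ℕ) (hp : 1 < p) (w : ℕ) (E : ℝ) (h : E = ((p:ℝ)-1)*w) :
    (((p:ℚ) ^ (-(w:ℤ)) : ℚ) : ℝ) = ((p:ℝ) ^ (-(1/((p:ℝ)-1)))) ^ E := by
  have hp1 : (1:ℝ) < p := by exact_mod_cast hp
  rw [cast_zpow_neg p (by omega), omega_rpow p hp]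
  congr 1
  rw [h]
  have hne : ((p:ℝ)-1) ≠ 0 := by linarith
  field_simp

theorem pow_z_eq (p lam δ v : ℕ) (hp : 1 < p) :
    ((p:ℝ) ^ (((v:ℤ) + δ + 1 - lam : ℤ)) : ℝ) = ((p^v : ℕ) : ℝ) * (p:ℝ)^((δ:ℝ)+1-(lam:ℝ)) := by
  have hp0 : (0:ℝ) < p := by positivity
  rw [← Real.rpow_intCast]
  push_cast
  rw [show (v:ℝ) + δ + 1 - lam = (v:ℝ) + ((δ:ℝ)+1-lam) by ring, Real.rpow_add hp0,
    Real.rpow_natCast]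

theorem base_ineq (p lam δ v j : ℕ) (hp : 1 < p) (hj : p^v ≤ j) :
    1 + ((p:ℝ)-1) * ((v:ℤ) + δ + 1 - lam : ℤ) ≤ (j:ℝ) * (p:ℝ)^((δ:ℝ)+1-(lam:ℝ)) := by
  have hP : (0:ℝ) < (p:ℝ)^((δ:ℝ)+1-(lam:ℝ)) := Real.rpow_pos_of_pos (by positivity) _
  have h1 := bern_le p hp ((v:ℤ) + δ + 1 - lam)
  rw [pow_z_eq p lam δ v hp] at h1
  have h2 : ((p^v : ℕ) : ℝ) * (p:ℝ)^((δ:ℝ)+1-(lam:ℝ)) ≤ (j:ℝ) * (p:ℝ)^((δ:ℝ)+1-(lam:ℝ)) := by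
    have : ((p^v : ℕ) : ℝ) ≤ (j:ℝ) := by exact_mod_cast hj
    nlinarith
  linarith

theorem base_ineq_strict (p lam δ v j : ℕ) (hp : 1 < p)
    (hj : p^v ∣ j) (hj0 : j ≠ 0)
    (hne1 : j ≠ p^(lam - δ - 1)) (hne2 : j ≠ p^(lam - δ)) (hδ : δ ≤ lam) :
    1 + ((p:ℝ)-1) * ((v:ℤ) + δ + 1 - lam : ℤ) < (j:ℝ) * (p:ℝ)^((δ:ℝ)+1-(lam:ℝ)) := by
  have hP : (0:ℝ) < (p:ℝ)^((δ:ℝ)+1-(lam:ℝ)) := Real.rpow_pos_of_pos (by positivity) _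
  have hple : p ^ v ≤ j := Nat.le_of_dvd (Nat.pos_of_ne_zero hj0) hj
  rcases eq_or_lt_of_le hple with heq | hlt
  · -- j = p^v, so z ∉ {0,1}
    have h0 : (v:ℤ) + δ + 1 - lam ≠ 0 := by
      intro h
      have hv : v = lam - δ - 1 := by omega
      exact hne1 (by rw [← heq, hv])
    have h1 : (v:ℤ) + δ + 1 - lam ≠ 1 := by
      intro h
      have hv : v = lam - δ := by omega
      exact hne2 (by rw [← heq, hv])
    have h2 := bern_lt p hp ((v:ℤ) + δ + 1 - lam) h0 h1
    rw [pow_z_eq p lam δ v hp, heq] at h2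
    exact h2
  · have h1 := bern_le p hp ((v:ℤ) + δ + 1 - lam)
    rw [pow_z_eq p lam δ v hp] at h1
    have h2 : ((p^v : ℕ) : ℝ) * (p:ℝ)^((δ:ℝ)+1-(lam:ℝ)) < (j:ℝ) * (p:ℝ)^((δ:ℝ)+1-(lam:ℝ)) := by
      have : ((p^v : ℕ) : ℝ) < (j:ℝ) := by exact_mod_cast hlt
      nlinarith
    linarith

theorem coeff_f (p lam j : ℕ) : (((X+1:ℤ[X])^(p^lam) - 1)).coeff j
    = if j = 0 then 0 else ((p^lam).choose j : ℤ) := by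
  rw [Polynomial.coeff_sub, Polynomial.coeff_X_add_one_pow, Polynomial.coeff_one]
  split_ifs with h <;> simp [h]

theorem val_choose (p : ℕ) (hp : p.Prime) (lam j : ℕ) (h0 : j ≠ 0) (hle : j ≤ p ^ lam) :
    padicValNat p ((p^lam).choose j) + padicValNat p j = lam := by
  haveI : Fact p.Prime := ⟨hp⟩
  have H := Nat.Prime.emultiplicity_choose_prime_pow_add_emultiplicity hp hle h0
  rw [← padicValNat_eq_emultiplicity (Nat.choose_pos hle).ne',
    ← padicValNat_eq_emultiplicity h0] at H
  exact_mod_cast H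

theorem norm_nat_eq (p : ℕ) (hp : p.Prime) (n : ℕ) (hn : n ≠ 0) :
    padicNorm p (n : ℚ) = (p:ℚ) ^ (-(padicValNat p n : ℤ)) := by
  haveI : Fact p.Prime := ⟨hp⟩
  rw [padicNorm.eq_zpow_of_nonzero (by exact_mod_cast hn), padicValRat.of_nat]

theorem term_exact (p : ℕ) (hp : p.Prime) (lam ε : ℕ) (hε : ε ≤ lam) :
    padicNorm p (((((X+1:ℤ[X])^(p^lam) - 1)).coeff (p^(lam-ε)) : ℚ)) = (p:ℚ)^(-(ε:ℤ)) := by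
  haveI : Fact p.Prime := ⟨hp⟩
  have h0 : p^(lam-ε) ≠ 0 := (Nat.pow_pos hp.pos : 0 < p^(lam-ε)).ne'
  have hle : p^(lam-ε) ≤ p^lam := Nat.pow_le_pow_right hp.pos (by omega)
  rw [coeff_f, if_neg h0]
  push_cast
  rw [norm_nat_eq p hp _ (Nat.choose_pos hle).ne']
  have hv := val_choose p hp lam _ h0 hle
  rw [padicValNat.prime_pow] at hv
  congr 2
  omega

theorem term_le (p lam : ℕ) (hp : p.Prime) (δ j : ℕ) :
    (padicNorm p ((((X+1:ℤ[X])^(p^lam) - 1).coeff j : ℚ)) : ℝ)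
    ≤ ((p:ℝ)^(-(1/((p:ℝ)-1)))) ^ ((p:ℝ) + (δ:ℝ)*((p:ℝ)-1) - (j:ℝ)*(p:ℝ)^((δ:ℝ)+1-(lam:ℝ))) := by
  haveI : Fact p.Prime := ⟨hp⟩
  have hp1 : 1 < p := hp.one_lt
  have hrpos : (0:ℝ) < ((p:ℝ)^(-(1/((p:ℝ)-1)))) ^ ((p:ℝ) + (δ:ℝ)*((p:ℝ)-1) - (j:ℝ)*(p:ℝ)^((δ:ℝ)+1-(lam:ℝ))) :=
    Real.rpow_pos_of_pos (Real.rpow_pos_of_pos (by positivity) _) _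
  by_cases h0 : j = 0
  · subst h0; rw [coeff_f, if_pos rfl]; push_cast; rw [padicNorm.zero]; exact_mod_cast hrpos.le
  by_cases hle : j ≤ p ^ lam
  swap
  · rw [coeff_f, if_neg h0, Nat.choose_eq_zero_of_lt (by omega)]
    push_cast; rw [padicNorm.zero]; exact_mod_cast hrpos.le
  -- main case
  rw [coeff_f, if_neg h0]
  push_cast
  set v := padicValNat p j with hv
  have hdvd : p ^ v ∣ j := pow_padicValNat_dvd
  have hvle : v ≤ lam := by
    have := Nat.le_of_dvd (Nat.pos_of_ne_zero h0) hdvd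
    exact (Nat.pow_le_pow_iff_right hp1).mp (this.trans hle)
  rw [norm_nat_eq p hp _ (Nat.choose_pos hle).ne']
  have hvc : padicValNat p ((p^lam).choose j) = lam - v := by
    have := val_choose p hp lam j h0 hle; omega
  rw [hvc]
  apply cmp_le p hp1 (lam - v)
  have hb := base_ineq p lam δ v j hp1 (Nat.le_of_dvd (Nat.pos_of_ne_zero h0) hdvd)
  have hcast : ((lam - v : ℕ) : ℝ) = (lam:ℝ) - (v:ℝ) := by
    push_cast [hvle]; ring
  rw [hcast]
  push_cast at hb
  linarith

theorem term_lt (p lam : ℕ) (hp : p.Prime) (δ j : ℕ) (hδ : δ ≤ lam)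
    (hne1 : j ≠ p^(lam - δ - 1)) (hne2 : j ≠ p^(lam - δ)) :
    (padicNorm p ((((X+1:ℤ[X])^(p^lam) - 1).coeff j : ℚ)) : ℝ)
    < ((p:ℝ)^(-(1/((p:ℝ)-1)))) ^ ((p:ℝ) + (δ:ℝ)*((p:ℝ)-1) - (j:ℝ)*(p:ℝ)^((δ:ℝ)+1-(lam:ℝ))) := by
  haveI : Fact p.Prime := ⟨hp⟩
  have hp1 : 1 < p := hp.one_lt
  have hrpos : (0:ℝ) < ((p:ℝ)^(-(1/((p:ℝ)-1)))) ^ ((p:ℝ) + (δ:ℝ)*((p:ℝ)-1) - (j:ℝ)*(p:ℝ)^((δ:ℝ)+1-(lam:ℝ))) :=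
    Real.rpow_pos_of_pos (Real.rpow_pos_of_pos (by positivity) _) _
  by_cases h0 : j = 0
  · subst h0; rw [coeff_f, if_pos rfl]; push_cast; rw [padicNorm.zero]; exact_mod_cast hrpos
  by_cases hle : j ≤ p ^ lam
  swap
  · rw [coeff_f, if_neg h0, Nat.choose_eq_zero_of_lt (by omega)]
    push_cast; rw [padicNorm.zero]; exact_mod_cast hrpos
  rw [coeff_f, if_neg h0]
  push_cast
  set v := padicValNat p j with hv
  have hdvd : p ^ v ∣ j := pow_padicValNat_dvd
  have hvle : v ≤ lam := by
    have := Nat.le_of_dvd (Nat.pos_of_ne_zero h0) hdvd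
    exact (Nat.pow_le_pow_iff_right hp1).mp (this.trans hle)
  rw [norm_nat_eq p hp _ (Nat.choose_pos hle).ne']
  have hvc : padicValNat p ((p^lam).choose j) = lam - v := by
    have := val_choose p hp lam j h0 hle; omega
  rw [hvc]
  apply cmp_lt p hp1 (lam - v)
  have hb := base_ineq_strict p lam δ v j hp1 hdvd h0 hne1 hne2 hδ
  have hcast : ((lam - v : ℕ) : ℝ) = (lam:ℝ) - (v:ℝ) := by
    push_cast [hvle]; ring
  rw [hcast]
  push_cast at hb
  linarith

theorem sum_norm_le (p : ℕ) [Fact p.Prime] {ι : Type*} (t : Finset ι) (c : ι → ℚ) (C : ℝ)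
    (hC : 0 ≤ C) (h : ∀ i ∈ t, (padicNorm p (c i) : ℝ) ≤ C) :
    ((padicNorm p (∑ i ∈ t, c i)) : ℝ) ≤ C := by
  classical
  revert h
  induction t using Finset.induction_on with
  | empty => intro h; simpa [padicNorm.zero] using hC
  | @insert a s ha ih =>
    intro h
    rw [Finset.sum_insert ha]
    have h1 : (padicNorm p (c a + ∑ i ∈ s, c i) : ℝ) ≤
        max (padicNorm p (c a) : ℝ) ((padicNorm p (∑ i ∈ s, c i)) : ℝ) := by
      have := padicNorm.nonarchimedean (p := p) (q := c a) (r := ∑ i ∈ s, c i)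
      rw [← Rat.cast_max]
      exact_mod_cast this
    exact h1.trans (max_le (h a (Finset.mem_insert_self a s))
      (ih fun i hi => h i (Finset.mem_insert_of_mem hi)))

theorem norm_le (p lam : ℕ) (hp : p.Prime) (δ : ℕ) :
    ∀ s : ℕ, 1 ≤ s → ∀ k : ℕ, (padicNorm p (((((X+1:ℤ[X])^(p^lam)-1)^s).coeff k : ℚ)) : ℝ)
      ≤ ((p:ℝ)^(-(1/((p:ℝ)-1)))) ^
        ((s:ℝ)*(p:ℝ) + (δ:ℝ)*((p:ℝ)-1)*(s:ℝ) - (k:ℝ)*(p:ℝ)^((δ:ℝ)+1-(lam:ℝ))) := by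
  haveI : Fact p.Prime := ⟨hp⟩
  have hωpos : (0:ℝ) < (p:ℝ)^(-(1/((p:ℝ)-1))) := Real.rpow_pos_of_pos (by exact_mod_cast hp.pos) _
  intro s hs
  induction s with
  | zero => omega
  | succ n ih =>
    rcases Nat.eq_or_lt_of_le hs with h1 | h1
    · -- n + 1 = 1
      have hn : n = 0 := by omega
      subst hn
      intro k
      have := term_le p lam hp δ k
      rw [pow_one]
      convert this using 2
      push_cast; ring
    · have hn : 1 ≤ n := by omega
      intro k
      rw [pow_succ, Polynomial.coeff_mul]
      push_cast
      apply sum_norm_le p _ _ _ (Real.rpow_pos_of_pos hωpos _).le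
      intro x hx
      have hxk : x.1 + x.2 = k := Finset.HasAntidiagonal.mem_antidiagonal.mp hx
      have hmul : (padicNorm p ((((X+1:ℤ[X])^(p^lam)-1)^n).coeff x.1 *
          (((X+1:ℤ[X])^(p^lam)-1)).coeff x.2 : ℚ) : ℝ)
          = (padicNorm p ((((X+1:ℤ[X])^(p^lam)-1)^n).coeff x.1 : ℚ) : ℝ) *
            (padicNorm p ((((X+1:ℤ[X])^(p^lam)-1)).coeff x.2 : ℚ) : ℝ) := by
        push_cast [padicNorm.mul]
        ring
      rw [hmul]
      have hA := ih hn x.1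
      have hB := term_le p lam hp δ x.2
      have := mul_le_mul hA hB (Rat.cast_nonneg.mpr (padicNorm.nonneg _)) (Real.rpow_pos_of_pos hωpos _).le
      refine this.trans (le_of_eq ?_)
      rw [← Real.rpow_add hωpos]
      congr 1
      have : (x.1 : ℝ) + (x.2 : ℝ) = (k : ℝ) := by exact_mod_cast hxk
      push_cast
      rw [← this]
      ring

theorem int_lt_step (p : ℕ) (hp : p.Prime) (c : ℤ) (n : ℕ)
    (h : padicNorm p (c:ℚ) < (p:ℚ)^(-(n:ℤ))) : (p:ℤ)^(n+1) ∣ c := by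
  haveI : Fact p.Prime := ⟨hp⟩
  have hp1 : (1:ℚ) < p := by exact_mod_cast hp.one_lt
  have : ((p^(n+1) : ℕ) : ℤ) ∣ c := by
    rw [padicNorm.dvd_iff_norm_le]
    by_cases hc : (c:ℚ) = 0
    · rw [hc, padicNorm.zero]
      positivity
    · rw [padicNorm.eq_zpow_of_nonzero hc] at h ⊢
      have hv := (zpow_lt_zpow_iff_right₀ hp1).mp h
      apply zpow_le_zpow_right₀ hp1.le
      push_cast
      omega
  exact_mod_cast this

theorem E_line (p lam : ℕ) (hp : 0 < p) (ε δ' s' : ℕ) (hε : ε ≤ lam)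
    (hd : δ' + 1 = ε ∨ δ' = ε) :
    (s':ℝ)*(p:ℝ) + (δ':ℝ)*((p:ℝ)-1)*(s':ℝ)
      - ((s' * p^(lam-ε) : ℕ):ℝ)*(p:ℝ)^((δ':ℝ)+1-(lam:ℝ))
    = ((p:ℝ)-1)*((s'*ε : ℕ):ℝ) := by
  have hp0 : (0:ℝ) < p := by exact_mod_cast hp
  have hkey : ((p:ℝ)^(lam-ε : ℕ)) * (p:ℝ)^((δ':ℝ)+1-(lam:ℝ)) = (p:ℝ)^((δ':ℝ)+1-(ε:ℝ)) := by
    rw [← Real.rpow_natCast (p:ℝ) (lam-ε), ← Real.rpow_add hp0]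
    congr 1
    push_cast [Nat.cast_sub hε]
    ring
  push_cast
  rw [mul_assoc (s':ℝ), hkey]
  rcases hd with hd | hd
  · subst hd
    have h0 : (δ':ℝ)+1-((δ'+1 : ℕ):ℝ) = 0 := by push_cast; ring
    rw [h0, Real.rpow_zero]
    push_cast
    ring
  · subst hd
    have h1 : (δ':ℝ)+1-((δ' : ℕ):ℝ) = 1 := by push_cast; ring
    rw [h1, Real.rpow_one]
    ring

theorem norm_eq (p lam : ℕ) (hp : p.Prime) (hlam : 1 ≤ lam) (ε : ℕ) (hε1 : 1 ≤ ε)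
    (hε : ε ≤ lam) :
    ∀ s : ℕ, 1 ≤ s →
      padicNorm p (((((X+1:ℤ[X])^(p^lam)-1)^s).coeff (s * p^(lam-ε)) : ℚ))
        = (p:ℚ)^(-((s*ε : ℕ):ℤ)) := by
  haveI : Fact p.Prime := ⟨hp⟩
  have hp1 : 1 < p := hp.one_lt
  have hp1q : (1:ℚ) < p := by exact_mod_cast hp1
  have hωpos : (0:ℝ) < (p:ℝ)^(-(1/((p:ℝ)-1))) := Real.rpow_pos_of_pos (by exact_mod_cast hp.pos) _
  intro s hs
  induction s with
  | zero => omega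
  | succ n ih =>
    rcases Nat.eq_or_lt_of_le hs with h1 | h1
    · have hn : n = 0 := by omega
      subst hn
      simp only [zero_add, pow_one, one_mul]
      rw [term_exact p hp lam ε hε]
    · have hn : 1 ≤ n := by omega
      have IH := ih hn
      set m := p^(lam-ε) with hm
      set f : ℤ[X] := (X+1:ℤ[X])^(p^lam)-1 with hf
      have hmem : ((n*m, m) : ℕ × ℕ) ∈ Finset.HasAntidiagonal.antidiagonal ((n+1) * m) := by
        rw [Finset.HasAntidiagonal.mem_antidiagonal]; ring
      have hsplit : ((f^n * f).coeff ((n+1)*m)) =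
          (f^n).coeff (n*m) * f.coeff m +
          ∑ x ∈ (Finset.HasAntidiagonal.antidiagonal ((n+1)*m)).erase (n*m, m),
            (f^n).coeff x.1 * f.coeff x.2 := by
        rw [Polynomial.coeff_mul, ← Finset.add_sum_erase _ _ hmem]
      have hrest : (p:ℤ)^((n+1)*ε+1) ∣
          ∑ x ∈ (Finset.HasAntidiagonal.antidiagonal ((n+1)*m)).erase (n*m, m),
            (f^n).coeff x.1 * f.coeff x.2 := by
        apply Finset.dvd_sum
        intro x hx
        have hxmem := Finset.mem_of_mem_erase hx
        have hxk : x.1 + x.2 = (n+1)*m := Finset.HasAntidiagonal.mem_antidiagonal.mp hxmem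
        have hxne : x ≠ (n*m, m) := Finset.ne_of_mem_erase hx
        have hb2 : x.2 ≠ m := by
          intro h2
          apply hxne
          have hx1 : x.1 = n * m := by
            have h' := hxk; rw [h2, Nat.succ_mul] at h'; omega
          exact Prod.ext hx1 h2
        have key : ∃ δ' : ℕ, (δ' + 1 = ε ∨ δ' = ε) ∧ δ' ≤ lam ∧
            x.2 ≠ p^(lam - δ' - 1) ∧ x.2 ≠ p^(lam - δ') := by
          by_cases hc : x.2 = p^(lam-ε-1)
          · refine ⟨ε-1, Or.inl (by omega), by omega, ?_, ?_⟩
            · have he : lam - (ε-1) - 1 = lam - ε := by omega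
              rw [he]; exact hb2
            · rw [hc]
              intro hcc
              have := Nat.pow_right_injective hp1 hcc
              omega
          · exact ⟨ε, Or.inr rfl, hε, hc, hb2⟩
        obtain ⟨δ', hδd, hδlam, hne1, hne2⟩ := key
        apply int_lt_step p hp _ ((n+1)*ε)
        have hA := norm_le p lam hp δ' n hn x.1
        have hB := term_lt p lam hp δ' x.2 hδlam hne1 hne2
        rw [← hf] at hA hB
        have hmul : (padicNorm p (((f^n).coeff x.1 * f.coeff x.2 : ℤ) : ℚ) : ℝ)
            = (padicNorm p (((f^n).coeff x.1 : ℤ) : ℚ) : ℝ) *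
              (padicNorm p ((f.coeff x.2 : ℤ) : ℚ) : ℝ) := by
          push_cast [padicNorm.mul]; ring
        have hprod : (padicNorm p (((f^n).coeff x.1 * f.coeff x.2 : ℤ) : ℚ) : ℝ)
            < ((p:ℝ)^(-(1/((p:ℝ)-1)))) ^
              (((n:ℝ)*(p:ℝ) + (δ':ℝ)*((p:ℝ)-1)*(n:ℝ) - (x.1:ℝ)*(p:ℝ)^((δ':ℝ)+1-(lam:ℝ)))
               + ((p:ℝ) + (δ':ℝ)*((p:ℝ)-1) - (x.2:ℝ)*(p:ℝ)^((δ':ℝ)+1-(lam:ℝ)))) := by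
          rw [hmul, Real.rpow_add hωpos]
          calc (padicNorm p (((f^n).coeff x.1 : ℤ) : ℚ) : ℝ) *
                (padicNorm p ((f.coeff x.2 : ℤ) : ℚ) : ℝ)
              ≤ ((p:ℝ)^(-(1/((p:ℝ)-1)))) ^
                (((n:ℝ)*(p:ℝ) + (δ':ℝ)*((p:ℝ)-1)*(n:ℝ) - (x.1:ℝ)*(p:ℝ)^((δ':ℝ)+1-(lam:ℝ))))
                * (padicNorm p ((f.coeff x.2 : ℤ) : ℚ) : ℝ) :=
              mul_le_mul_of_nonneg_right hA (Rat.cast_nonneg.mpr (padicNorm.nonneg _))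
            _ < _ := mul_lt_mul_of_pos_left hB (Real.rpow_pos_of_pos hωpos _)
        have hEsum : (((n:ℝ)*(p:ℝ) + (δ':ℝ)*((p:ℝ)-1)*(n:ℝ) - (x.1:ℝ)*(p:ℝ)^((δ':ℝ)+1-(lam:ℝ)))
               + ((p:ℝ) + (δ':ℝ)*((p:ℝ)-1) - (x.2:ℝ)*(p:ℝ)^((δ':ℝ)+1-(lam:ℝ))))
            = (((n+1):ℕ):ℝ)*(p:ℝ) + (δ':ℝ)*((p:ℝ)-1)*(((n+1):ℕ):ℝ)
              - ((((n+1))*m : ℕ):ℝ)*(p:ℝ)^((δ':ℝ)+1-(lam:ℝ)) := by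
          have hxr : (x.1 : ℝ) + (x.2 : ℝ) = ((((n+1))*m : ℕ):ℝ) := by exact_mod_cast hxk
          push_cast at hxr ⊢
          rw [← hxr]
          ring
        rw [hEsum] at hprod
        have hEval := E_line p lam hp.pos ε δ' (n+1) hε hδd
        rw [← hm] at hEval
        rw [← cmp_eq p hp1 ((n+1)*ε) _ hEval] at hprod
        exact_mod_cast hprod
      -- assemble
      rw [pow_succ, hsplit, Int.cast_add]
      have hmain : padicNorm p (((f^n).coeff (n*m) * f.coeff m : ℤ) : ℚ)
          = (p:ℚ)^(-(((n+1)*ε : ℕ):ℤ)) := by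
        push_cast [padicNorm.mul]
        rw [IH, term_exact p hp lam ε hε]
        rw [← zpow_add₀ (by positivity : (p:ℚ) ≠ 0)]
        congr 1
        push_cast
        ring
      have hrestn : padicNorm p ((∑ x ∈ (Finset.HasAntidiagonal.antidiagonal ((n+1)*m)).erase (n*m, m),
            (f^n).coeff x.1 * f.coeff x.2 : ℤ) : ℚ) ≤ (p:ℚ)^(-(((n+1)*ε+1 : ℕ)):ℤ) := by
        rw [← padicNorm.dvd_iff_norm_le]
        exact_mod_cast hrest
      have hlt : padicNorm p ((∑ x ∈ (Finset.HasAntidiagonal.antidiagonal ((n+1)*m)).erase (n*m, m),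
            (f^n).coeff x.1 * f.coeff x.2 : ℤ) : ℚ)
          < padicNorm p (((f^n).coeff (n*m) * f.coeff m : ℤ) : ℚ) := by
        rw [hmain]
        refine hrestn.trans_lt ?_
        rw [zpow_lt_zpow_iff_right₀ hp1q]
        push_cast
        omega
      rw [padicNorm.add_eq_max_of_ne hlt.ne']
      rw [max_eq_left hlt.le]
      rw [hmain]

theorem f_monic (p lam : ℕ) (hp : p.Prime) (hlam : 1 ≤ lam) :
    ((X+1:ℤ[X])^(p^lam)-1).Monic ∧ ((X+1:ℤ[X])^(p^lam)-1).natDegree = p^lam := by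
  have h1 : (X+1:ℤ[X]) = X + C 1 := by rw [C_1]
  have hm : (X+1:ℤ[X]).Monic := by rw [h1]; exact monic_X_add_C 1
  have hmp : ((X+1:ℤ[X])^(p^lam)).Monic := hm.pow _
  have hnd : ((X+1:ℤ[X])^(p^lam)).natDegree = p^lam := by
    rw [hm.natDegree_pow, h1, natDegree_X_add_C, mul_one]
  have hdeg : (1:ℤ[X]).degree < ((X+1:ℤ[X])^(p^lam)).degree := by
    rw [degree_one, Polynomial.degree_eq_natDegree hmp.ne_zero, hnd]
    exact_mod_cast (Nat.pow_pos hp.pos : 0 < p^lam)  -- 0 < p^lam as WithBot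
  constructor
  · exact hmp.sub_of_left hdeg
  · rw [natDegree_sub_eq_left_of_natDegree_lt, hnd]
    rw [natDegree_one, hnd]
    exact (Nat.pow_pos hp.pos : 0 < p^lam)

theorem coeff_top (p lam : ℕ) (hp : p.Prime) (hlam : 1 ≤ lam) (s : ℕ) :
    ((((X+1:ℤ[X])^(p^lam)-1)^s)).coeff (s * p^lam) = 1 := by
  obtain ⟨hm, hnd⟩ := f_monic p lam hp hlam
  have hms : (((X+1:ℤ[X])^(p^lam)-1)^s).Monic := hm.pow s
  have : (((X+1:ℤ[X])^(p^lam)-1)^s).natDegree = s * p^lam := by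
    rw [hm.natDegree_pow, hnd]
  rw [← this]
  exact hms.coeff_natDegree

/-- Lemme 5.2-1: estimates on the coefficients `α_{k,s}` of
`((x+1)^{p^λ} − 1)^s = Σ_k α_{k,s} x^k`.  For `0 ≤ δ ≤ λ−1` one has
`|α_{k,s}|_p ≤ ω^{sp + δ(p−1)s − k p^{δ+1−λ}}` with `ω = p^{−1/(p−1)}`,
with equality if `k = s p^{λ−δ−1}` or `k = s p^{λ−δ}`; in particular
`|α_{s p^λ, s}|_p = 1` and `|α_{p^{λ−δ}, 1}|_p = p^{−δ}`. -/
theorem frobenius_coeff_estimates (p : ℕ) (hp : p.Prime) (lam : ℕ) (hlam : 1 ≤ lam)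
    (α : ℕ → ℕ → ℤ)
    (hα : ∀ s k : ℕ, α s k =
      ((((Polynomial.X + 1 : Polynomial ℤ) ^ (p ^ lam) - 1) ^ s).coeff k))
    (ω : ℝ) (hω : ω = (p : ℝ) ^ (-(1 / ((p : ℝ) - 1)))) :
    ∀ s : ℕ, 1 ≤ s → ∀ δ : ℕ, δ ≤ lam - 1 →
      (∀ k : ℕ, ((padicNorm p ((α s k : ℚ)) : ℝ)) ≤
        ω ^ ((s : ℝ) * p + (δ : ℝ) * ((p : ℝ) - 1) * s
          - (k : ℝ) * (p : ℝ) ^ ((δ : ℝ) + 1 - (lam : ℝ)))) ∧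
      (∀ k : ℕ, (k = s * p ^ (lam - δ - 1) ∨ k = s * p ^ (lam - δ)) →
        ((padicNorm p ((α s k : ℚ)) : ℝ)) =
        ω ^ ((s : ℝ) * p + (δ : ℝ) * ((p : ℝ) - 1) * s
          - (k : ℝ) * (p : ℝ) ^ ((δ : ℝ) + 1 - (lam : ℝ)))) ∧
      ((padicNorm p ((α s (s * p ^ lam) : ℚ)) : ℝ) = 1) ∧
      ((padicNorm p ((α 1 (p ^ (lam - δ)) : ℚ)) : ℝ) = (p : ℝ) ^ (-(δ : ℝ))) := by
  haveI : Fact p.Prime := ⟨hp⟩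
  subst hω
  intro s hs δ hδ
  have hδlam : δ + 1 ≤ lam := by omega
  refine ⟨?_, ?_, ?_, ?_⟩
  · intro k
    rw [hα s k]
    exact norm_le p lam hp δ s hs k
  · intro k hk
    rcases hk with hk | hk
    · subst hk
      rw [hα]
      have he : lam - (δ+1) = lam - δ - 1 := by omega
      have h1 := norm_eq p lam hp hlam (δ+1) (by omega) (by omega) s hs
      rw [he] at h1
      rw [h1]
      have hEval := E_line p lam hp.pos (δ+1) δ s (by omega) (Or.inl rfl)
      rw [he] at hEval
      exact cmp_eq p hp.one_lt (s*(δ+1)) _ hEval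
    · subst hk
      rw [hα]
      by_cases hδ0 : δ = 0
      · subst hδ0
        have hEval := E_line p lam hp.pos 0 0 s (Nat.zero_le _) (Or.inr rfl)
        have hc := cmp_eq p hp.one_lt (s*0) _ hEval
        simp only [Nat.sub_zero] at hc ⊢
        rw [coeff_top p lam hp hlam s]
        rw [← hc]
        norm_num
      · have h1 := norm_eq p lam hp hlam δ (by omega) (by omega) s hs
        rw [h1]
        exact cmp_eq p hp.one_lt (s*δ) _ (E_line p lam hp.pos δ δ s (by omega) (Or.inr rfl))
  · rw [hα, coeff_top p lam hp hlam s]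
    simp [padicNorm.one]
  · rw [hα, pow_one, term_exact p hp lam δ (by omega)]
    exact cast_zpow_neg p hp.pos δ
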